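/- Let d ≥ 1, let Q : EuclideanSpace ℝ d → ℝ be differentiable with gradient ∇Q that is μ-Lipschitz and λ-strongly monotone (λ, μ > 0), and let w* satisfy ∇Q(w*) = 0. Let n > f ≥ 0 be integers, σ ≥ 0, let w be a point, and write x = w − w*. Let H be an index set of size n − f and T ⊆ H with |T| ≥ n − 2f. Let {gᵢ}_{i∈H} be independent integrable random vectors, each with mean E[gᵢ] = ∇Q(w) and E‖gᵢ − ∇Q(w)‖² ≤ σ². Define the real random variable φ = Σ_{i∈T} ⟨x, gᵢ⟩ − f·‖x‖·max_{i∈H} ‖gᵢ‖. Then E[φ] ≥ (nλ − f(2λ + μ))·‖x‖² − f·σ·(1 + √(n−f−1))·‖x‖. -/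

import Mathlib

open MeasureTheory ProbabilityTheory
open scoped RealInnerProductSpace

section Aux

variable {Ω : Type*} [MeasureSpace Ω] [IsProbabilityMeasure (ℙ : Measure Ω)]

lemma my_sqrt_integrable {Z : Ω → ℝ} (hZ : Integrable Z) (hZ0 : ∀ ω, 0 ≤ Z ω) :
    Integrable (fun ω => Real.sqrt (Z ω)) := by
  have hsm : AEStronglyMeasurable (fun ω => Real.sqrt (Z ω)) ℙ :=
    Real.continuous_sqrt.comp_aestronglyMeasurable hZ.1
  refine Integrable.mono' (((integrable_const (1:ℝ)).add hZ).div_const 2) hsm ?_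
  filter_upwards with ω
  rw [Real.norm_of_nonneg (Real.sqrt_nonneg _)]
  simp only [Pi.add_apply, Pi.one_apply]
  nlinarith [Real.sq_sqrt (hZ0 ω), Real.sqrt_nonneg (Z ω), sq_nonneg (Real.sqrt (Z ω) - 1)]

lemma my_integral_sqrt_le {Z : Ω → ℝ} (hZ : Integrable Z) (hZ0 : ∀ ω, 0 ≤ Z ω) :
    ∫ ω, Real.sqrt (Z ω) ≤ Real.sqrt (∫ ω, Z ω) := by
  have hintS := my_sqrt_integrable hZ hZ0
  set I := ∫ ω, Real.sqrt (Z ω) with hIdef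
  have hexp : ∫ ω, (Real.sqrt (Z ω) - I)^2 = (∫ ω, Z ω) - I^2 := by
    have hptw : ∀ ω, (Real.sqrt (Z ω) - I)^2 = (Z ω - (2*I) * Real.sqrt (Z ω)) + I^2 := by
      intro ω
      have h := Real.sq_sqrt (hZ0 ω)
      nlinarith [h]
    have h1 : Integrable (fun ω => Z ω - (2*I) * Real.sqrt (Z ω)) :=
      hZ.sub (hintS.const_mul _)
    calc ∫ ω, (Real.sqrt (Z ω) - I)^2
        = ∫ ω, ((Z ω - (2*I) * Real.sqrt (Z ω)) + I^2) := by
          exact integral_congr_ae (Filter.Eventually.of_forall hptw)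
      _ = (∫ ω, (Z ω - (2*I) * Real.sqrt (Z ω))) + I^2 := by
          rw [integral_add h1 (integrable_const _), integral_const]
          simp
      _ = (∫ ω, Z ω) - I^2 := by
          rw [integral_sub hZ (hintS.const_mul _), integral_const_mul _ _, ← hIdef]; ring
  have hpos : 0 ≤ ∫ ω, (Real.sqrt (Z ω) - I)^2 :=
    integral_nonneg fun ω => sq_nonneg _
  exact Real.le_sqrt_of_sq_le (by linarith [hexp ▸ hpos])

end Aux

lemma my_finset_max_bound {ι : Type*} {H : Finset ι} (X : ι → ℝ) {j : ι} (hj : j ∈ H) :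
    X j ≤ (∑ i ∈ H, X i) / H.card +
      Real.sqrt (((H.card : ℝ) - 1) / H.card * ∑ i ∈ H, X i ^ 2) := by
  classical
  have hm1 : 1 ≤ H.card := Finset.card_pos.mpr ⟨j, hj⟩
  set m : ℝ := (H.card : ℝ) with hmdef
  have hm : (1:ℝ) ≤ m := by rw [hmdef]; exact_mod_cast hm1
  have hm0 : (0:ℝ) < m := by linarith
  set Xb : ℝ := (∑ i ∈ H, X i) / m with hXb
  set y : ι → ℝ := fun i => X i - Xb with hy
  have hA : ∑ i ∈ H, X i = m * Xb := by
    rw [hXb]; field_simp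
  have hsumy : ∑ i ∈ H, y i = 0 := by
    simp only [hy, Finset.sum_sub_distrib, Finset.sum_const, nsmul_eq_mul, hA, ← hmdef]
    ring
  -- Cauchy-Schwarz on the erased set
  have herase : ∑ i ∈ H.erase j, y i = - y j := by
    rw [← Finset.sum_erase_add H y hj] at hsumy
    linarith
  have hcard_erase : ((H.erase j).card : ℝ) = m - 1 := by
    rw [Finset.card_erase_of_mem hj]
    push_cast [Nat.cast_sub hm1]
    rfl
  have hCS : (∑ i ∈ H.erase j, y i)^2 ≤ ((H.erase j).card : ℝ) * ∑ i ∈ H.erase j, y i ^2 :=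
    sq_sum_le_card_mul_sum_sq
  have hsq_erase : ∑ i ∈ H.erase j, y i ^ 2 = (∑ i ∈ H, y i ^2) - y j ^2 := by
    rw [← Finset.sum_erase_add H (fun i => y i ^ 2) hj]
    ring
  have hyj : m * y j ^ 2 ≤ (m - 1) * ∑ i ∈ H, y i ^ 2 := by
    rw [herase, hcard_erase, hsq_erase] at hCS
    nlinarith [sq_nonneg (y j)]
  have hy_le_X : ∑ i ∈ H, y i ^ 2 ≤ ∑ i ∈ H, X i ^ 2 := by
    have hptw : ∀ i, y i ^ 2 = X i ^2 - 2 * Xb * X i + Xb ^2 := by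
      intro i; rw [hy]; ring
    simp only [hptw]
    rw [Finset.sum_add_distrib, Finset.sum_sub_distrib, ← Finset.mul_sum,
      Finset.sum_const, nsmul_eq_mul, hA, ← hmdef]
    nlinarith [sq_nonneg Xb]
  have hfin : y j ^ 2 ≤ (m - 1)/m * ∑ i ∈ H, X i ^ 2 := by
    rw [div_mul_eq_mul_div, le_div_iff₀ hm0]
    nlinarith [hyj, hy_le_X]
  have : y j ≤ Real.sqrt ((m - 1)/m * ∑ i ∈ H, X i ^ 2) := by
    calc y j ≤ |y j| := le_abs_self _
      _ = Real.sqrt (y j ^2) := (Real.sqrt_sq_eq_abs _).symm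
      _ ≤ _ := Real.sqrt_le_sqrt hfin
  have hXj : X j = Xb + y j := by rw [hy]; ring
  rw [hXj]
  exact add_le_add le_rfl this

lemma my_biSup_eq_sup' {ι : Type*} {H : Finset ι} (hne : H.Nonempty) (F : ι → ℝ)
    (hF : ∀ i ∈ H, 0 ≤ F i) : (⨆ i ∈ H, F i) = H.sup' hne F := by
  haveI : Nonempty ι := ⟨hne.choose⟩
  have h0 : 0 ≤ H.sup' hne F := le_trans (hF _ hne.choose_spec) (Finset.le_sup' F hne.choose_spec)
  have hub : ∀ i, (⨆ _ : i ∈ H, F i) ≤ H.sup' hne F := by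
    intro i
    by_cases h : i ∈ H
    · rw [ciSup_pos h]; exact Finset.le_sup' F h
    · haveI : IsEmpty (i ∈ H) := ⟨h⟩
      rw [Real.iSup_of_isEmpty]; exact h0
  refine le_antisymm (ciSup_le hub) ?_
  obtain ⟨j, hj, hsup⟩ := H.exists_mem_eq_sup' hne F
  rw [hsup]
  have hbdd : BddAbove (Set.range fun i => ⨆ _ : i ∈ H, F i) := by
    refine ⟨H.sup' hne F, ?_⟩
    rintro _ ⟨i, rfl⟩
    exact hub i
  calc F j = ⨆ _ : j ∈ H, F j := (ciSup_pos (f := fun _ : j ∈ H => F j) hj).symm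
    _ ≤ ⨆ i, ⨆ _ : i ∈ H, F i := le_ciSup hbdd j

/-- Eqns. (53)–(56) of Appendix A-C: lower bound on the expectation of
`φ = Σ_{i∈T} ⟨x, gᵢ⟩ − f‖x‖·max_{i∈H}‖gᵢ‖`. -/
theorem expected_phi_lower_bound {d : ℕ} (hd : 0 < d)
    (Q : EuclideanSpace ℝ (Fin d) → ℝ)
    (gradQ : EuclideanSpace ℝ (Fin d) → EuclideanSpace ℝ (Fin d))
    (hQ : ∀ x, HasGradientAt Q (gradQ x) x)
    {lam mu : ℝ} (hlam : 0 < lam) (hmu : 0 < mu)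
    (hLip : ∀ a b, ‖gradQ a - gradQ b‖ ≤ mu * ‖a - b‖)
    (hSM : ∀ a b, lam * ‖a - b‖ ^ 2 ≤ ⟪a - b, gradQ a - gradQ b⟫)
    (wstar : EuclideanSpace ℝ (Fin d)) (hmin : gradQ wstar = 0)
    {n f : ℕ} (hfn : f < n) {σ : ℝ} (hσ : 0 ≤ σ)
    (w x : EuclideanSpace ℝ (Fin d)) (hx : x = w - wstar)
    {ι : Type*} (H T : Finset ι) (hH : H.card = n - f)
    (hT : T ⊆ H) (hTcard : n - 2 * f ≤ T.card)
    {Ω : Type*} [MeasureSpace Ω] [IsProbabilityMeasure (ℙ : Measure Ω)]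
    (g : ι → Ω → EuclideanSpace ℝ (Fin d)) (hmeas : ∀ i, Measurable (g i))
    (hindep : iIndepFun (fun i : H => g i) ℙ)
    (hint : ∀ i ∈ H, Integrable (g i))
    (hmean : ∀ i ∈ H, ∫ ω, g i ω ∂(ℙ : MeasureTheory.Measure Ω) = gradQ w)
    (hint2 : ∀ i ∈ H, Integrable (fun ω => ‖g i ω - gradQ w‖ ^ 2))
    (hvar : ∀ i ∈ H, ∫ ω, ‖g i ω - gradQ w‖ ^ 2 ∂(ℙ : MeasureTheory.Measure Ω) ≤ σ ^ 2) :
    ((n : ℝ) * lam - (f : ℝ) * (2 * lam + mu)) * ‖x‖ ^ 2 -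
        (f : ℝ) * σ * (1 + Real.sqrt ((n : ℝ) - (f : ℝ) - 1)) * ‖x‖ ≤
      ∫ ω, ((∑ i ∈ T, ⟪x, g i ω⟫) - (f : ℝ) * ‖x‖ * (⨆ i ∈ H, ‖g i ω‖)) ∂(ℙ : MeasureTheory.Measure Ω) := by
  classical
  -- analytic facts
  have hip : lam * ‖x‖ ^ 2 ≤ ⟪x, gradQ w⟫ := by
    have h := hSM w wstar
    rw [hmin, sub_zero] at h
    rwa [hx]
  have hgradnorm : ‖gradQ w‖ ≤ mu * ‖x‖ := by
    have h := hLip w wstar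
    rw [hmin, sub_zero] at h
    rwa [hx]
  have hne : H.Nonempty := by
    rw [← Finset.card_pos, hH]; omega
  have hmval : (H.card : ℝ) = (n : ℝ) - f := by
    rw [hH, Nat.cast_sub hfn.le]
  set m : ℝ := (H.card : ℝ) with hmdef
  have hm1 : (1 : ℝ) ≤ m := by
    rw [hmdef]; exact_mod_cast Finset.card_pos.mpr hne
  have hm0 : (0 : ℝ) < m := by linarith
  -- first moment bound for each agent
  have hXint : ∀ i ∈ H, Integrable (fun ω => ‖g i ω - gradQ w‖) :=
    fun i hi => ((hint i hi).sub (integrable_const _)).norm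
  have hXbound : ∀ i ∈ H, ∫ ω, ‖g i ω - gradQ w‖ ≤ σ := by
    intro i hi
    have h1 : ∀ ω : Ω, ‖g i ω - gradQ w‖ = Real.sqrt (‖g i ω - gradQ w‖ ^ 2) :=
      fun ω => (Real.sqrt_sq (norm_nonneg _)).symm
    calc ∫ ω, ‖g i ω - gradQ w‖
        = ∫ ω, Real.sqrt (‖g i ω - gradQ w‖ ^ 2) :=
          integral_congr_ae (Filter.Eventually.of_forall h1)
      _ ≤ Real.sqrt (∫ ω, ‖g i ω - gradQ w‖ ^ 2) :=
          my_integral_sqrt_le (hint2 i hi) (fun ω => sq_nonneg _)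
      _ ≤ Real.sqrt (σ ^ 2) := Real.sqrt_le_sqrt (hvar i hi)
      _ = σ := Real.sqrt_sq hσ
  -- the max function M
  set M : Ω → ℝ := fun ω => H.sup' hne (fun i => ‖g i ω‖) with hMdef
  have hMmeas : Measurable M := by
    have h := Finset.measurable_sup' hne (f := fun i (ω : Ω) => ‖g i ω‖)
      (fun i _ => (hmeas i).norm)
    have he : M = H.sup' hne (fun i (ω : Ω) => ‖g i ω‖) := by
      funext ω; exact (Finset.sup'_apply hne (fun i (ω : Ω) => ‖g i ω‖) ω).symm
    rwa [he]
  have hM0 : ∀ ω, 0 ≤ M ω := by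
    intro ω
    exact le_trans (norm_nonneg (g hne.choose ω))
      (Finset.le_sup' (fun i => ‖g i ω‖) hne.choose_spec)
  have hMint : Integrable M := by
    refine Integrable.mono' (integrable_finset_sum H fun i hi => (hint i hi).norm)
      hMmeas.aestronglyMeasurable ?_
    filter_upwards with ω
    rw [Real.norm_of_nonneg (hM0 ω)]
    exact Finset.sup'_le _ _ fun i hi =>
      Finset.single_le_sum (fun j _ => norm_nonneg (g j ω)) hi
  -- the quadratic bound function
  set Z : Ω → ℝ := fun ω => ((m - 1) / m) * ∑ i ∈ H, ‖g i ω - gradQ w‖ ^ 2 with hZdef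
  have hZint : Integrable Z :=
    ((integrable_finset_sum H fun i hi => hint2 i hi).const_mul _)
  have hZ0 : ∀ ω, 0 ≤ Z ω := fun ω =>
    mul_nonneg (div_nonneg (by linarith) (by linarith))
      (Finset.sum_nonneg fun i _ => sq_nonneg _)
  set B : Ω → ℝ := fun ω =>
    ‖gradQ w‖ + (∑ i ∈ H, ‖g i ω - gradQ w‖) / m + Real.sqrt (Z ω) with hBdef
  have hSint : Integrable (fun ω => (∑ i ∈ H, ‖g i ω - gradQ w‖) / m) :=
    (integrable_finset_sum H fun i hi => hXint i hi).div_const m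
  have hBint : Integrable B :=
    ((integrable_const _).add hSint).add (my_sqrt_integrable hZint hZ0)
  have hMB : ∀ ω, M ω ≤ B ω := by
    intro ω
    refine Finset.sup'_le _ _ fun i hi => ?_
    have h1 : ‖g i ω‖ ≤ ‖gradQ w‖ + ‖g i ω - gradQ w‖ := by
      calc ‖g i ω‖ = ‖gradQ w + (g i ω - gradQ w)‖ := by rw [add_sub_cancel]
        _ ≤ ‖gradQ w‖ + ‖g i ω - gradQ w‖ := norm_add_le _ _
    have h2 := my_finset_max_bound (fun i => ‖g i ω - gradQ w‖) hi
    simp only [hBdef, hZdef, ← hmdef]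
    linarith
  -- expectation of M
  have hIM : ∫ ω, M ω ≤ ‖gradQ w‖ + σ + Real.sqrt (m - 1) * σ := by
    have h1 : ∫ ω, M ω ≤ ∫ ω, B ω := integral_mono hMint hBint hMB
    have h2 : ∫ ω, B ω = ‖gradQ w‖ + (∑ i ∈ H, ∫ ω, ‖g i ω - gradQ w‖) / m
        + ∫ ω, Real.sqrt (Z ω) := by
      rw [hBdef]
      have ha : Integrable (fun ω => ‖gradQ w‖ + (∑ i ∈ H, ‖g i ω - gradQ w‖) / m) :=
        (integrable_const _).add hSint
      rw [integral_add ha (my_sqrt_integrable hZint hZ0),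
        integral_add (integrable_const _) hSint, integral_const]
      simp only [measure_univ, probReal_univ, one_smul]
      rw [integral_div, integral_finset_sum H fun i hi => hXint i hi]
    have h3 : (∑ i ∈ H, ∫ ω, ‖g i ω - gradQ w‖) / m ≤ σ := by
      rw [div_le_iff₀ hm0]
      calc ∑ i ∈ H, ∫ ω, ‖g i ω - gradQ w‖ ≤ ∑ _i ∈ H, σ :=
            Finset.sum_le_sum fun i hi => hXbound i hi
        _ = m * σ := by rw [Finset.sum_const, nsmul_eq_mul, hmdef]
        _ = σ * m := by ring
    have h4 : ∫ ω, Real.sqrt (Z ω) ≤ Real.sqrt (m - 1) * σ := by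
      have hZval : ∫ ω, Z ω = ((m - 1) / m) * ∑ i ∈ H, ∫ ω, ‖g i ω - gradQ w‖ ^ 2 := by
        rw [hZdef, integral_const_mul _ _, integral_finset_sum H fun i hi => hint2 i hi]
      have hZle : ∫ ω, Z ω ≤ (m - 1) * σ ^ 2 := by
        rw [hZval]
        have hs : ∑ i ∈ H, ∫ ω, ‖g i ω - gradQ w‖ ^ 2 ≤ m * σ ^ 2 := by
          calc ∑ i ∈ H, ∫ ω, ‖g i ω - gradQ w‖ ^ 2 ≤ ∑ _i ∈ H, σ ^ 2 :=
                Finset.sum_le_sum fun i hi => hvar i hi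
            _ = m * σ ^ 2 := by rw [Finset.sum_const, nsmul_eq_mul, hmdef]
        have hfrac : (0:ℝ) ≤ (m - 1) / m := div_nonneg (by linarith) (by linarith)
        calc ((m - 1) / m) * ∑ i ∈ H, ∫ ω, ‖g i ω - gradQ w‖ ^ 2
            ≤ ((m - 1) / m) * (m * σ ^ 2) := mul_le_mul_of_nonneg_left hs hfrac
          _ = (m - 1) * σ ^ 2 := by field_simp
      calc ∫ ω, Real.sqrt (Z ω) ≤ Real.sqrt (∫ ω, Z ω) := my_integral_sqrt_le hZint hZ0
        _ ≤ Real.sqrt ((m - 1) * σ ^ 2) := Real.sqrt_le_sqrt hZle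
        _ = Real.sqrt (m - 1) * σ := by
            rw [Real.sqrt_mul (by linarith), Real.sqrt_sq hσ]
      -- done
    linarith
  -- inner products
  have hipint : ∀ i ∈ H, Integrable (fun ω => ⟪x, g i ω⟫) :=
    fun i hi => (innerSL ℝ x).integrable_comp (hint i hi)
  have hipval : ∀ i ∈ H, (∫ ω, ⟪x, g i ω⟫) = ⟪x, gradQ w⟫ := by
    intro i hi
    have h := (innerSL ℝ x).integral_comp_comm (hint i hi)
    simp only [hmean i hi] at h
    exact h
  -- rewrite integrand
  have hieq : (∫ ω, ((∑ i ∈ T, ⟪x, g i ω⟫) - (f : ℝ) * ‖x‖ * (⨆ i ∈ H, ‖g i ω‖)))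
      = ∫ ω, ((∑ i ∈ T, ⟪x, g i ω⟫) - (f : ℝ) * ‖x‖ * M ω) := by
    refine integral_congr_ae (Filter.Eventually.of_forall fun ω => ?_)
    have hsup := my_biSup_eq_sup' hne (fun i => ‖g i ω‖) (fun i _ => norm_nonneg (g i ω))
    dsimp only
    rw [hsup]
  rw [hieq]
  have hTint : Integrable (fun ω => ∑ i ∈ T, ⟪x, g i ω⟫) :=
    integrable_finset_sum T fun i hi => hipint i (hT hi)
  rw [integral_sub hTint (hMint.const_mul _),
    integral_finset_sum T (fun i hi => hipint i (hT hi)), integral_const_mul _ _]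
  have hsum : ∑ i ∈ T, ∫ ω, ⟪x, g i ω⟫ = (T.card : ℝ) * ⟪x, gradQ w⟫ := by
    rw [Finset.sum_congr rfl (fun i hi => hipval i (hT hi)), Finset.sum_const, nsmul_eq_mul]
  rw [hsum]
  -- final arithmetic
  have hTc : (n : ℝ) - 2 * f ≤ (T.card : ℝ) := by
    have h1 : n ≤ n - 2 * f + 2 * f := by omega
    have h2 : (n : ℝ) ≤ ((n - 2 * f : ℕ) : ℝ) + 2 * (f : ℝ) := by exact_mod_cast h1
    have h3 : ((n - 2 * f : ℕ) : ℝ) ≤ (T.card : ℝ) := Nat.cast_le.mpr hTcard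
    linarith
  have hlx : (0:ℝ) ≤ lam * ‖x‖ ^ 2 := by positivity
  have hmain1 : ((n : ℝ) - 2 * f) * (lam * ‖x‖ ^ 2) ≤ (T.card : ℝ) * ⟪x, gradQ w⟫ :=
    calc ((n : ℝ) - 2 * f) * (lam * ‖x‖ ^ 2) ≤ (T.card : ℝ) * (lam * ‖x‖ ^ 2) :=
          mul_le_mul_of_nonneg_right hTc hlx
      _ ≤ (T.card : ℝ) * ⟪x, gradQ w⟫ :=
          mul_le_mul_of_nonneg_left hip (Nat.cast_nonneg _)
  have hms : m - 1 = (n : ℝ) - f - 1 := by rw [hmval]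
  have hIM2 : ∫ ω, M ω ≤ mu * ‖x‖ + σ + Real.sqrt ((n : ℝ) - f - 1) * σ := by
    rw [← hms]; linarith
  have hfx : (0:ℝ) ≤ (f : ℝ) * ‖x‖ := by positivity
  have hmain2 : (f : ℝ) * ‖x‖ * (∫ ω, M ω)
      ≤ (f : ℝ) * ‖x‖ * (mu * ‖x‖ + σ + Real.sqrt ((n : ℝ) - f - 1) * σ) :=
    mul_le_mul_of_nonneg_left hIM2 hfx
  nlinarith [hmain1, hmain2]
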